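/- The number of labeled trees on vertex set {0,1,...,n} (equivalently on n+1 vertices) equals (n+1)^{n-1}. -/

import Mathlib

open Function List

namespace CayleyAux

variable {n : ℕ}

/-- v lies on a cycle of f. -/
def Cyclic (f : Fin (n+1) → Fin (n+1)) (v : Fin (n+1)) : Prop := ∃ k, 0 < k ∧ f^[k] v = v

/-- f is rooted at a: a is fixed and every orbit reaches a. -/
def RootedAt (f : Fin (n+1) → Fin (n+1)) (a : Fin (n+1)) : Prop :=
  f a = a ∧ ∀ v, ∃ k, f^[k] v = a

def IsRooted (f : Fin (n+1) → Fin (n+1)) : Prop := ∃ a, RootedAt f a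

lemma Cyclic.apply {f : Fin (n+1) → Fin (n+1)} {v} (h : Cyclic f v) : Cyclic f (f v) := by
  obtain ⟨k, hk, hv⟩ := h
  exact ⟨k, hk, by rw [← iterate_succ_apply, iterate_succ_apply', hv]⟩

lemma Cyclic.iterate {f : Fin (n+1) → Fin (n+1)} {v} (h : Cyclic f v) (m : ℕ) :
    Cyclic f (f^[m] v) := by
  induction m with
  | zero => exact h
  | succ m ih => rw [iterate_succ_apply']; exact ih.apply

lemma cyclic_self_iterate {f : Fin (n+1) → Fin (n+1)} {v} (h : Cyclic f v) :
    ∀ t, ∃ s ≥ t, f^[s] v = v := by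
  obtain ⟨k, hk, hv⟩ := h
  intro t
  refine ⟨k * t + k, by nlinarith, ?_⟩
  induction t with
  | zero => simpa using hv
  | succ t ih =>
    have : k * (t+1) + k = k + (k * t + k) := by ring
    rw [this, iterate_add_apply, ih, hv]

/-- if v is cyclic and some iterate of v lands in x, then come back: v equals an iterate of x. -/
lemma Cyclic.eq_iterate_of_iterate_eq {f : Fin (n+1) → Fin (n+1)} {v x : Fin (n+1)}
    (h : Cyclic f v) {t : ℕ} (hx : f^[t] v = x) : ∃ s, f^[s] x = v := by
  obtain ⟨s, hs, hsv⟩ := cyclic_self_iterate h t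
  refine ⟨s - t, ?_⟩
  rw [← hx, ← iterate_add_apply, Nat.sub_add_cancel hs, hsv]

lemma RootedAt.eq_of_cyclic {f : Fin (n+1) → Fin (n+1)} {a v} (hf : RootedAt f a)
    (hv : Cyclic f v) : v = a := by
  obtain ⟨k, hk⟩ := hf.2 v
  obtain ⟨s, hs, hsv⟩ := cyclic_self_iterate hv k
  rw [← hsv, ← Nat.sub_add_cancel hs, iterate_add_apply, hk, iterate_fixed hf.1]

/-- Injectivity along the minimal chain to the root. -/
lemma RootedAt.chain_inj {f : Fin (n+1) → Fin (n+1)} {a v : Fin (n+1)} (hf : RootedAt f a)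
    {j : ℕ} (hmin : ∀ t, f^[t] v = a → j ≤ t) :
    ∀ i i', i ≤ j → i' ≤ j → f^[i] v = f^[i'] v → i = i' := by
  have key : ∀ i i', i < i' → i' ≤ j → f^[i] v ≠ f^[i'] v := by
    intro i i' hii hi'j heq
    have hcyc : Cyclic f (f^[i] v) := by
      refine ⟨i' - i, by omega, ?_⟩
      rw [← iterate_add_apply, Nat.sub_add_cancel (le_of_lt hii), ← heq]
    have := hmin i (by rw [hf.eq_of_cyclic hcyc])
    omega
  intro i i' hi hi' heq
  rcases lt_trichotomy i i' with h | h | h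
  · exact absurd heq (key _ _ h hi')
  · exact h
  · exact absurd heq.symm (key _ _ h hi)

/-- every orbit reaches the root within n+1 steps (card many). -/
lemma RootedAt.iterate_card {f : Fin (n+1) → Fin (n+1)} {a : Fin (n+1)} (hf : RootedAt f a)
    (v : Fin (n+1)) : f^[n+1] v = a := by
  obtain ⟨k0, hk0⟩ := hf.2 v
  classical
  have hex : ∃ k, f^[k] v = a := ⟨k0, hk0⟩
  let k := Nat.find hex
  have hk : f^[k] v = a := Nat.find_spec hex
  have hmin : ∀ t, f^[t] v = a → k ≤ t := fun t ht => Nat.find_min' hex ht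
  have hinj : Function.Injective (fun i : Fin (k+1) => f^[(i : ℕ)] v) := by
    intro i i' h
    exact Fin.ext (hf.chain_inj hmin _ _ (Nat.lt_succ_iff.1 i.2) (Nat.lt_succ_iff.1 i'.2) h)
  have hcard := Fintype.card_le_of_injective _ hinj
  simp only [Fintype.card_fin] at hcard
  have hkn : k ≤ n := by omega
  have h1 : n + 1 - k + k = n + 1 := Nat.sub_add_cancel (by omega)
  calc f^[n+1] v = f^[n+1-k+k] v := by rw [h1]
    _ = f^[n+1-k] (f^[k] v) := iterate_add_apply f _ _ v
    _ = a := by rw [hk, iterate_fixed hf.1]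

/-- every orbit eventually hits a cyclic point. -/
lemma exists_iterate_cyclic (f : Fin (n+1) → Fin (n+1)) (v : Fin (n+1)) :
    ∃ k, Cyclic f (f^[k] v) := by
  have : ¬ Function.Injective (fun i : Fin (n+2) => f^[(i : ℕ)] v) := by
    intro h
    have := Fintype.card_le_of_injective _ h
    simp only [Fintype.card_fin] at this
    omega
  simp only [Function.Injective, not_forall] at this
  obtain ⟨i, j, hij, hne⟩ := this
  have hne' : (i : ℕ) ≠ (j : ℕ) := fun h => hne (Fin.ext h)
  rcases Nat.lt_or_ge (i : ℕ) (j : ℕ) with h | h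
  · exact ⟨i, ⟨j - i, by omega, by
      rw [← iterate_add_apply, Nat.sub_add_cancel (le_of_lt h), hij]⟩⟩
  · have h' : (j : ℕ) < i := by omega
    exact ⟨j, ⟨i - j, by omega, by
      rw [← iterate_add_apply, Nat.sub_add_cancel (le_of_lt h'), ← hij]⟩⟩

/-- cyclic points are injectively mapped by f. -/
lemma cyclic_injOn {f : Fin (n+1) → Fin (n+1)} {u v : Fin (n+1)} (hu : Cyclic f u)
    (hv : Cyclic f v) (h : f u = f v) : u = v := by
  obtain ⟨k, hk, hku⟩ := hu
  obtain ⟨l, hl, hlv⟩ := hv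
  have h1 : f^[k * l] u = u := by
    clear hlv h; obtain ⟨s, hs, h⟩ := cyclic_self_iterate ⟨k, hk, hku⟩ 0
    induction l with
    | zero => omega
    | succ l ih =>
      rcases Nat.eq_zero_or_pos l with rfl | hl'
      · simpa using hku
      · have : k * (l + 1) = k * l + k := by ring
        rw [this, iterate_add_apply, hku, ih hl']
  have h2 : f^[k * l] v = v := by
    clear hku h h1
    induction k with
    | zero => omega
    | succ k ih =>
      rcases Nat.eq_zero_or_pos k with rfl | hk'
      · simpa using hlv
      · have : (k + 1) * l = k * l + l := by ring
        rw [this, iterate_add_apply, hlv, ih hk']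
  have hpos : 0 < k * l := Nat.mul_pos hk hl
  have hkl : k * l - 1 + 1 = k * l := Nat.succ_pred_eq_of_pos hpos
  calc u = f^[k*l] u := h1.symm
    _ = f^[k*l - 1 + 1] u := by rw [hkl]
    _ = f^[k*l - 1] (f u) := iterate_succ_apply f _ u
    _ = f^[k*l - 1] (f v) := by rw [h]
    _ = f^[k*l - 1 + 1] v := (iterate_succ_apply f _ v).symm
    _ = f^[k*l] v := by rw [hkl]
    _ = v := h2

end CayleyAux
namespace CayleyAux
open Function List

variable {n : ℕ}

noncomputable def cycFinset (g : Fin (n+1) → Fin (n+1)) : Finset (Fin (n+1)) :=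
  @Finset.filter _ (fun v => Cyclic g v) (Classical.decPred _) Finset.univ

lemma mem_cycFinset {g : Fin (n+1) → Fin (n+1)} {v} : v ∈ cycFinset g ↔ Cyclic g v := by
  classical
  simp [cycFinset]

/-- the sorted list of cyclic points -/
noncomputable def cycList (g : Fin (n+1) → Fin (n+1)) : List (Fin (n+1)) :=
  (cycFinset g).sort (· ≤ ·)

lemma mem_cycList {g : Fin (n+1) → Fin (n+1)} {v} : v ∈ cycList g ↔ Cyclic g v := by
  rw [cycList, Finset.mem_sort, mem_cycFinset]

lemma cycList_nodup (g : Fin (n+1) → Fin (n+1)) : (cycList g).Nodup :=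
  Finset.sort_nodup _ _

/-- the chain list D = map g (sorted cyclic points) -/
noncomputable def chainList (g : Fin (n+1) → Fin (n+1)) : List (Fin (n+1)) :=
  (cycList g).map g

lemma chainList_nodup (g : Fin (n+1) → Fin (n+1)) : (chainList g).Nodup := by
  refine List.Nodup.map_on ?_ (cycList_nodup g)
  intro x hx y hy hxy
  exact cyclic_injOn (mem_cycList.1 hx) (mem_cycList.1 hy) hxy

lemma mem_chainList {g : Fin (n+1) → Fin (n+1)} {v} : v ∈ chainList g ↔ Cyclic g v := by
  constructor
  · rintro h
    obtain ⟨u, hu, rfl⟩ := List.mem_map.1 h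
    exact (mem_cycList.1 hu).apply
  · intro hv
    obtain ⟨k, hk, hkv⟩ := hv
    have : g^[k-1] v ∈ cycList g :=
      mem_cycList.2 (Cyclic.iterate (⟨k, hk, hkv⟩ : Cyclic g v) (k-1))
    refine List.mem_map.2 ⟨g^[k-1] v, this, ?_⟩
    have heq : k - 1 + 1 = k := Nat.succ_pred_eq_of_pos hk
    calc g (g^[k-1] v) = g^[k-1+1] v := (iterate_succ_apply' g _ v).symm
      _ = v := by rw [heq, hkv]

lemma chainList_toFinset (g : Fin (n+1) → Fin (n+1)) :
    (chainList g).toFinset = cycFinset g := by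
  ext v; rw [List.mem_toFinset, mem_chainList, mem_cycFinset]

lemma chainList_length (g : Fin (n+1) → Fin (n+1)) :
    (chainList g).length = (cycFinset g).card := by
  rw [chainList, List.length_map, cycList, Finset.length_sort]

lemma chainList_length_pos (g : Fin (n+1) → Fin (n+1)) : 0 < (chainList g).length := by
  obtain ⟨k, hk⟩ := exists_iterate_cyclic g 0
  have : g^[k] 0 ∈ chainList g := mem_chainList.2 hk
  exact List.length_pos_iff.2 (List.ne_nil_of_mem this)

lemma chainList_length_le (g : Fin (n+1) → Fin (n+1)) : (chainList g).length ≤ n + 1 := by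
  rw [chainList_length]
  simpa using Finset.card_le_univ (cycFinset g)

/-- Joyal forward: the new function -/
noncomputable def jfun (g : Fin (n+1) → Fin (n+1)) : Fin (n+1) → Fin (n+1) := fun v =>
  if v ∈ chainList g then
    (if (chainList g).idxOf v + 1 < (chainList g).length
      then (chainList g).getD ((chainList g).idxOf v + 1) v else v)
  else g v

/-- Joyal forward: the mark -/
noncomputable def jmark (g : Fin (n+1) → Fin (n+1)) : Fin (n+1) := (chainList g).headI

lemma jfun_of_not_mem {g : Fin (n+1) → Fin (n+1)} {v} (h : v ∉ chainList g) :
    jfun g v = g v := by rw [jfun, if_neg h]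

lemma list_getD_mem {α} [Inhabited α] {l : List α} {i : ℕ} (h : i < l.length) (d : α) :
    l.getD i d ∈ l := by
  rw [List.getD_eq_getElem l d h]; exact List.getElem_mem h

/-- the chain step: jfun moves one step along chainList, fixing the last element -/
lemma jfun_chain_step (g : Fin (n+1) → Fin (n+1)) {t : ℕ} (ht : t < (chainList g).length) (d) :
    jfun g ((chainList g).getD t d) =
      (chainList g).getD (min (t+1) ((chainList g).length - 1)) d := by
  set D := chainList g with hD
  have hmem : D.getD t d ∈ D := list_getD_mem ht d
  have hidx : D.idxOf (D.getD t d) = t := by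
    rw [List.getD_eq_getElem D d ht]
    have h1 : D.idxOf D[t] < D.length := List.idxOf_lt_length_iff.2 (List.getElem_mem ht)
    exact (List.Nodup.getElem_inj_iff (chainList_nodup g)).1
      (List.getElem_idxOf h1)
  rw [jfun, if_pos hmem, hidx]
  by_cases h : t + 1 < D.length
  · rw [if_pos h]
    have hmin : min (t+1) (D.length - 1) = t + 1 := by omega
    rw [hmin]
    rw [List.getD_eq_getElem D _ h, List.getD_eq_getElem D d h]
  · rw [if_neg h]
    have hmin : min (t+1) (D.length - 1) = t := by omega
    rw [hmin]

/-- iterating jfun along the chain -/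
lemma jfun_iterate_chain (g : Fin (n+1) → Fin (n+1)) (d) :
    ∀ (j i : ℕ), i < (chainList g).length →
      (jfun g)^[j] ((chainList g).getD i d) =
        (chainList g).getD (min (i+j) ((chainList g).length - 1)) d := by
  intro j
  induction j with
  | zero =>
    intro i hi
    have : min (i + 0) ((chainList g).length - 1) = i := by omega
    rw [this, iterate_zero_apply]
  | succ j ih =>
    intro i hi
    rw [iterate_succ_apply', ih i hi]
    have hlt : min (i+j) ((chainList g).length - 1) < (chainList g).length := by
      have := chainList_length_pos g; omega
    rw [jfun_chain_step g hlt d]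
    congr 1
    omega

lemma jfun_fix_last (g : Fin (n+1) → Fin (n+1)) (d) :
    jfun g ((chainList g).getD ((chainList g).length - 1) d) =
      (chainList g).getD ((chainList g).length - 1) d := by
  have h := jfun_chain_step g (t := (chainList g).length - 1)
    (by have := chainList_length_pos g; omega) d
  rwa [min_eq_right (by omega)] at h

/-- every point reaches the chain under jfun -/
lemma jfun_reaches_chain (g : Fin (n+1) → Fin (n+1)) :
    ∀ (k v), Cyclic g (g^[k] v) → ∃ l, (jfun g)^[l] v ∈ chainList g := by
  intro k
  induction k with
  | zero => intro v hv; exact ⟨0, mem_chainList.2 hv⟩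
  | succ k ih =>
    intro v hv
    by_cases h : v ∈ chainList g
    · exact ⟨0, h⟩
    · have : Cyclic g (g^[k] (g v)) := by rwa [← iterate_succ_apply]
      obtain ⟨l, hl⟩ := ih (g v) this
      refine ⟨l + 1, ?_⟩
      rwa [iterate_add_apply, iterate_one, jfun_of_not_mem h]

lemma jfun_rootedAt (g : Fin (n+1) → Fin (n+1)) :
    RootedAt (jfun g) ((chainList g).getD ((chainList g).length - 1) 0) := by
  constructor
  · exact jfun_fix_last g 0
  · intro v
    obtain ⟨k, hk⟩ := exists_iterate_cyclic g v
    obtain ⟨l, hl⟩ := jfun_reaches_chain g k v hk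
    obtain ⟨i, hi, hiv⟩ := List.mem_iff_getElem.1 hl
    refine ⟨(chainList g).length + l, ?_⟩
    rw [iterate_add_apply, ← hiv, ← List.getD_eq_getElem (chainList g) 0 hi,
      jfun_iterate_chain g 0 (chainList g).length i hi, min_eq_right (by omega)]

lemma jfun_isRooted (g : Fin (n+1) → Fin (n+1)) : IsRooted (jfun g) :=
  ⟨_, jfun_rootedAt g⟩

end CayleyAux
namespace CayleyAux
open Function List

variable {n : ℕ}

/-- length of minimal chain from b to its eventual root -/
noncomputable def chainLen (f : Fin (n+1) → Fin (n+1)) (b : Fin (n+1)) : ℕ :=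
  Nat.find (⟨n+1, rfl⟩ : ∃ k, f^[k] b = f^[n+1] b)

lemma chainLen_spec (f : Fin (n+1) → Fin (n+1)) (b : Fin (n+1)) :
    f^[chainLen f b] b = f^[n+1] b :=
  Nat.find_spec (⟨n+1, rfl⟩ : ∃ k, f^[k] b = f^[n+1] b)

lemma chainLen_min (f : Fin (n+1) → Fin (n+1)) (b : Fin (n+1)) {t : ℕ}
    (ht : f^[t] b = f^[n+1] b) : chainLen f b ≤ t :=
  Nat.find_min' _ ht

/-- the chain b, f b, ..., f^[chainLen] b -/
noncomputable def backList (f : Fin (n+1) → Fin (n+1)) (b : Fin (n+1)) : List (Fin (n+1)) :=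
  (List.range (chainLen f b + 1)).map (fun k => f^[k] b)

lemma backList_length (f : Fin (n+1) → Fin (n+1)) (b : Fin (n+1)) :
    (backList f b).length = chainLen f b + 1 := by
  rw [backList, List.length_map, List.length_range]

lemma backList_getD (f : Fin (n+1) → Fin (n+1)) (b : Fin (n+1)) {i : ℕ}
    (hi : i < chainLen f b + 1) (d) : (backList f b).getD i d = f^[i] b := by
  have hi' : i < ((List.range (chainLen f b + 1)).map (fun k => f^[k] b)).length := by
    simpa using hi
  rw [backList, List.getD_eq_getElem _ d hi']
  simp only [List.getElem_map, List.getElem_range]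

noncomputable def sortedBack (f : Fin (n+1) → Fin (n+1)) (b : Fin (n+1)) : List (Fin (n+1)) :=
  ((backList f b).toFinset).sort (· ≤ ·)

lemma mem_sortedBack {f : Fin (n+1) → Fin (n+1)} {b v} :
    v ∈ sortedBack f b ↔ v ∈ backList f b := by
  rw [sortedBack, Finset.mem_sort, List.mem_toFinset]

/-- Joyal backward map -/
noncomputable def jinv (f : Fin (n+1) → Fin (n+1)) (b : Fin (n+1)) :
    Fin (n+1) → Fin (n+1) := fun v =>
  if v ∈ sortedBack f b then (backList f b).getD ((sortedBack f b).idxOf v) 0 else f v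

lemma headI_eq_getD {α} [Inhabited α] {l : List α} (h : l ≠ []) : l.headI = l.getD 0 default := by
  cases l with
  | nil => exact absurd rfl h
  | cons a t => rfl

/-- Roundtrip 1: jinv ∘ jf = id, for arbitrary g. -/
theorem jinv_jfun (g : Fin (n+1) → Fin (n+1)) : jinv (jfun g) (jmark g) = g := by
  have hm1 : 1 ≤ (chainList g).length := chainList_length_pos g
  have hmn : (chainList g).length ≤ n + 1 := chainList_length_le g
  have hb0 : jmark g = (chainList g).getD 0 0 := by
    rw [jmark, headI_eq_getD (List.ne_nil_of_length_pos hm1)]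
    simp
  have hiter : ∀ k, (jfun g)^[k] (jmark g) =
      (chainList g).getD (min k ((chainList g).length - 1)) 0 := by
    intro k
    rw [hb0, jfun_iterate_chain g 0 k 0 (by omega)]
    congr 1
    omega
  have hroot : (jfun g)^[n+1] (jmark g) = (chainList g).getD ((chainList g).length - 1) 0 := by
    rw [hiter (n+1), min_eq_right (by omega)]
  have hDnodup : (chainList g).Nodup := chainList_nodup g
  have hgetD_inj : ∀ i j, i < (chainList g).length → j < (chainList g).length →
      (chainList g).getD i 0 = (chainList g).getD j 0 → i = j := by
    intro i j hi hj hij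
    rw [List.getD_eq_getElem _ 0 hi, List.getD_eq_getElem _ 0 hj] at hij
    exact (hDnodup.getElem_inj_iff).1 hij
  have hcl : chainLen (jfun g) (jmark g) = (chainList g).length - 1 := by
    have h1 : chainLen (jfun g) (jmark g) ≤ (chainList g).length - 1 := chainLen_min _ _ (by
      rw [hiter ((chainList g).length - 1), hroot, min_eq_right (by omega)])
    have h2 := chainLen_spec (jfun g) (jmark g)
    rw [hiter (chainLen (jfun g) (jmark g)), hroot] at h2
    have := hgetD_inj _ _ (by omega) (by omega) h2
    omega
  have hback : backList (jfun g) (jmark g) = chainList g := by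
    have hlen : (backList (jfun g) (jmark g)).length = (chainList g).length := by
      rw [backList_length, hcl]; omega
    refine List.ext_getElem hlen ?_
    intro i h1 h2
    have hi' : i < chainLen (jfun g) (jmark g) + 1 := by
      rw [backList_length] at h1; omega
    rw [← List.getD_eq_getElem (backList (jfun g) (jmark g)) 0 h1,
      ← List.getD_eq_getElem (chainList g) 0 h2,
      backList_getD _ _ hi' 0, hiter i, min_eq_left (by omega)]
  have hsort : sortedBack (jfun g) (jmark g) = cycList g := by
    rw [sortedBack, hback, chainList_toFinset, cycList]
  funext v
  by_cases hv : v ∈ cycList g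
  · have hv' : v ∈ sortedBack (jfun g) (jmark g) := by rwa [hsort]
    rw [jinv, if_pos hv', hback, hsort]
    have hidx : (cycList g).idxOf v < (cycList g).length := List.idxOf_lt_length_iff.2 hv
    have hidx' : (cycList g).idxOf v < (chainList g).length := by
      rw [chainList, List.length_map]; exact hidx
    rw [List.getD_eq_getElem _ 0 hidx']
    show (List.map g (cycList g))[(cycList g).idxOf v]'(by rw [List.length_map]; exact hidx) = g v
    rw [List.getElem_map]
    congr 1
    exact List.getElem_idxOf hidx
  · have hv' : v ∉ sortedBack (jfun g) (jmark g) := by rwa [hsort]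
    rw [jinv, if_neg hv', jfun_of_not_mem]
    intro hc
    exact hv (mem_cycList.2 (mem_chainList.1 hc))

end CayleyAux
namespace CayleyAux
open Function List

variable {n : ℕ}

theorem jfun_jinv {f : Fin (n+1) → Fin (n+1)} (hf : IsRooted f) (b : Fin (n+1)) :
    jfun (jinv f b) = f ∧ jmark (jinv f b) = b := by
  obtain ⟨a0, ha0⟩ := hf
  have haeq : f^[n+1] b = a0 := ha0.iterate_card b
  have ha : RootedAt f (f^[n+1] b) := by rwa [haeq]
  have hspec : f^[chainLen f b] b = f^[n+1] b := chainLen_spec f b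
  have hmin' : ∀ t, f^[t] b = f^[n+1] b → chainLen f b ≤ t := fun t ht => chainLen_min f b ht
  have hElen : (backList f b).length = chainLen f b + 1 := backList_length f b
  have hEnodup : (backList f b).Nodup := by
    rw [backList]
    refine List.Nodup.map_on ?_ List.nodup_range
    intro i hi j hj hij
    exact ha.chain_inj hmin' i j (by simpa [Nat.lt_succ_iff] using hi)
      (by simpa [Nat.lt_succ_iff] using hj) hij
  have hlast : (backList f b).getD (chainLen f b) 0 = f^[n+1] b := by
    rw [backList_getD f b (by omega) 0, hspec]
  have ha_mem : f^[n+1] b ∈ backList f b := by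
    rw [← hlast]; exact list_getD_mem (by omega) 0
  have hL'len : (sortedBack f b).length = (backList f b).length := by
    rw [sortedBack, Finset.length_sort, List.toFinset_card_of_nodup hEnodup]
  have hL'nodup : (sortedBack f b).Nodup := Finset.sort_nodup _ _
  -- basic facts about g := jinv f b
  have g_off : ∀ v, v ∉ backList f b → jinv f b v = f v := by
    intro v hv
    rw [jinv, if_neg (fun h => hv (mem_sortedBack.1 h))]
  have g_on : ∀ v, v ∈ backList f b →
      jinv f b v = (backList f b).getD ((sortedBack f b).idxOf v) 0 := by
    intro v hv
    rw [jinv, if_pos (mem_sortedBack.2 hv)]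
  have g_mem : ∀ v, v ∈ backList f b → jinv f b v ∈ backList f b := by
    intro v hv
    rw [g_on v hv]
    have : (sortedBack f b).idxOf v < (backList f b).length := by
      rw [← hL'len]; exact List.idxOf_lt_length_iff.2 (mem_sortedBack.2 hv)
    exact list_getD_mem this 0
  have g_iter_mem : ∀ (t : ℕ) (v), v ∈ backList f b → (jinv f b)^[t] v ∈ backList f b := by
    intro t
    induction t with
    | zero => intro v hv; exact hv
    | succ t ih =>
      intro v hv
      rw [iterate_succ_apply]
      exact ih _ (g_mem v hv)
  have g_inj : ∀ v w, v ∈ backList f b → w ∈ backList f b →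
      jinv f b v = jinv f b w → v = w := by
    intro v w hv hw hvw
    rw [g_on v hv, g_on w hw] at hvw
    have hiv : (sortedBack f b).idxOf v < (backList f b).length := by
      rw [← hL'len]; exact List.idxOf_lt_length_iff.2 (mem_sortedBack.2 hv)
    have hiw : (sortedBack f b).idxOf w < (backList f b).length := by
      rw [← hL'len]; exact List.idxOf_lt_length_iff.2 (mem_sortedBack.2 hw)
    rw [List.getD_eq_getElem _ 0 hiv, List.getD_eq_getElem _ 0 hiw] at hvw
    have hidx := (hEnodup.getElem_inj_iff).1 hvw
    have h1 := List.getElem_idxOf (xs := sortedBack f b) (x := v) (by rw [hL'len]; exact hiv)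
    have h2 := List.getElem_idxOf (xs := sortedBack f b) (x := w) (by rw [hL'len]; exact hiw)
    rw [← h1, ← h2]
    congr 1
  have g_iter_cancel : ∀ (t : ℕ) (v w), v ∈ backList f b → w ∈ backList f b →
      (jinv f b)^[t] v = (jinv f b)^[t] w → v = w := by
    intro t
    induction t with
    | zero => intro v w _ _ h; exact h
    | succ t ih =>
      intro v w hv hw h
      rw [iterate_succ_apply, iterate_succ_apply] at h
      exact g_inj v w hv hw (ih _ _ (g_mem v hv) (g_mem w hw) h)
  -- cyclic points of g are exactly backList f b
  have hcyc : ∀ v, Cyclic (jinv f b) v ↔ v ∈ backList f b := by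
    intro v
    constructor
    · intro hv
      by_cases hE : ∃ t, (jinv f b)^[t] v ∈ backList f b
      · obtain ⟨t, ht⟩ := hE
        obtain ⟨s, hs⟩ := hv.eq_iterate_of_iterate_eq (x := (jinv f b)^[t] v) rfl
        rw [← hs]
        exact g_iter_mem s _ ht
      · push_neg at hE
        have hgf : ∀ t, (jinv f b)^[t] v = f^[t] v := by
          intro t
          induction t with
          | zero => rfl
          | succ t ih =>
            rw [iterate_succ_apply', iterate_succ_apply', ih, ← ih]
            exact g_off _ (hE t)
        obtain ⟨k, hk⟩ := ha.2 v
        exact absurd (by rw [hgf k, hk]; exact ha_mem) (hE k)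
    · intro hv
      have hninj : ¬ Function.Injective (fun i : Fin (n+2) => (jinv f b)^[(i:ℕ)] v) := by
        intro h
        have := Fintype.card_le_of_injective _ h
        simp only [Fintype.card_fin] at this
        omega
      simp only [Function.Injective, not_forall] at hninj
      obtain ⟨i, j, hij, hne⟩ := hninj
      have hne' : (i : ℕ) ≠ (j : ℕ) := fun h => hne (Fin.ext h)
      have key : ∀ (i j : ℕ), i < j → (jinv f b)^[i] v = (jinv f b)^[j] v →
          Cyclic (jinv f b) v := by
        intro i j hlt heq
        have h1 : (jinv f b)^[j] v = (jinv f b)^[i] ((jinv f b)^[j-i] v) := by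
          rw [← iterate_add_apply]
          congr 1
          omega
        have h2 : (jinv f b)^[i] v = (jinv f b)^[i] ((jinv f b)^[j-i] v) := by
          rw [← h1, heq]
        have := g_iter_cancel i v ((jinv f b)^[j-i] v) hv (g_iter_mem _ _ hv) h2
        exact ⟨j - i, by omega, this.symm⟩
      rcases Nat.lt_or_ge (i : ℕ) (j : ℕ) with h | h
      · exact key _ _ h hij
      · exact key _ _ (by omega) hij.symm
  have hcycFinset : cycFinset (jinv f b) = (backList f b).toFinset := by
    ext v
    rw [mem_cycFinset, List.mem_toFinset, hcyc]
  have hcycList : cycList (jinv f b) = sortedBack f b := by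
    rw [cycList, hcycFinset, sortedBack]
  -- chainList (jinv f b) = backList f b
  have hchain : chainList (jinv f b) = backList f b := by
    have hlen : (chainList (jinv f b)).length = (backList f b).length := by
      rw [chainList, List.length_map, hcycList, hL'len]
    refine List.ext_getElem hlen ?_
    intro j h1 h2
    have h3 : j < (cycList (jinv f b)).length := by
      rw [chainList, List.length_map] at h1; exact h1
    simp only [chainList, List.getElem_map]
    have h4 : (cycList (jinv f b))[j] ∈ backList f b :=
      (hcyc _).1 (mem_cycList.1 (List.getElem_mem h3))
    rw [g_on _ h4]
    have h5 : j < (sortedBack f b).length := by rwa [hcycList] at h3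
    have h6 : (cycList (jinv f b))[j] = (sortedBack f b)[j]'h5 :=
      List.getElem_of_eq hcycList h3
    have h7 : (sortedBack f b).idxOf ((cycList (jinv f b))[j]) = j := by
      rw [h6]
      have h8 : (sortedBack f b).idxOf ((sortedBack f b)[j]) < (sortedBack f b).length :=
        List.idxOf_lt_length_iff.2 (List.getElem_mem h5)
      exact (hL'nodup.getElem_inj_iff).1 (List.getElem_idxOf h8)
    rw [h7, List.getD_eq_getElem _ 0 h2]
  constructor
  · -- jfun (jinv f b) = f
    funext v
    by_cases hv : v ∈ backList f b
    · have hv' : v ∈ chainList (jinv f b) := by rwa [hchain]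
      have hidx : (backList f b).idxOf v < (backList f b).length :=
        List.idxOf_lt_length_iff.2 hv
      rw [jfun, if_pos hv', hchain]
      have hvE : (backList f b)[(backList f b).idxOf v] = v := List.getElem_idxOf hidx
      by_cases hlt : (backList f b).idxOf v + 1 < (backList f b).length
      · rw [if_pos hlt]
        have hi1 : (backList f b).idxOf v + 1 < chainLen f b + 1 := by
          rwa [hElen] at hlt
        rw [backList_getD f b hi1 v, iterate_succ_apply']
        congr 1
        have : (backList f b).getD ((backList f b).idxOf v) 0 = f^[(backList f b).idxOf v] b :=
          backList_getD f b (by rw [← hElen]; exact hidx) 0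
        rw [← this, List.getD_eq_getElem _ 0 hidx, hvE]
      · rw [if_neg hlt]
        have hieq : (backList f b).idxOf v = chainLen f b := by omega
        have : v = f^[n+1] b := by
          rw [← hvE, ← List.getD_eq_getElem _ 0 hidx, hieq, hlast]
        rw [this, ha.1]
    · have hv' : v ∉ chainList (jinv f b) := by rwa [hchain]
      rw [jfun_of_not_mem hv', g_off v hv]
  · -- jmark (jinv f b) = b
    rw [jmark, hchain, headI_eq_getD (List.ne_nil_of_length_pos (by omega))]
    have h0 : (backList f b).getD 0 default = f^[0] b := backList_getD f b (by omega) default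
    rw [h0, iterate_zero_apply]

end CayleyAux
namespace CayleyAux
open Function List

variable {n : ℕ}

noncomputable def joyalEquiv :
    (Fin (n+1) → Fin (n+1)) ≃ {p : (Fin (n+1) → Fin (n+1)) × Fin (n+1) // IsRooted p.1} where
  toFun g := ⟨(jfun g, jmark g), jfun_isRooted g⟩
  invFun p := jinv p.1.1 p.1.2
  left_inv g := jinv_jfun g
  right_inv := by
    rintro ⟨⟨f, b⟩, hf⟩
    obtain ⟨h1, h2⟩ := jfun_jinv hf b
    exact Subtype.ext (Prod.ext h1 h2)

def pairEquiv (P : (Fin (n+1) → Fin (n+1)) → Prop) :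
    {p : (Fin (n+1) → Fin (n+1)) × Fin (n+1) // P p.1} ≃
      {f : Fin (n+1) → Fin (n+1) // P f} × Fin (n+1) where
  toFun p := (⟨p.1.1, p.2⟩, p.1.2)
  invFun q := ⟨(q.1.1, q.2), q.1.2⟩
  left_inv := by rintro ⟨⟨f, b⟩, hf⟩; rfl
  right_inv := by rintro ⟨⟨f, hf⟩, b⟩; rfl

/-- conjugation of a function by a permutation -/
def conj (σ : Equiv.Perm (Fin (n+1))) (f : Fin (n+1) → Fin (n+1)) : Fin (n+1) → Fin (n+1) :=
  σ ∘ f ∘ σ.symm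

lemma conj_iterate (σ : Equiv.Perm (Fin (n+1))) (f : Fin (n+1) → Fin (n+1)) (k : ℕ) (v) :
    (conj σ f)^[k] v = σ (f^[k] (σ.symm v)) := by
  induction k generalizing v with
  | zero => simp
  | succ k ih =>
    rw [iterate_succ_apply, ih]
    simp [conj]

lemma RootedAt.conj {σ : Equiv.Perm (Fin (n+1))} {f : Fin (n+1) → Fin (n+1)} {a}
    (hf : RootedAt f a) : RootedAt (CayleyAux.conj σ f) (σ a) := by
  constructor
  · show σ (f (σ.symm (σ a))) = σ a
    rw [Equiv.symm_apply_apply, hf.1]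
  · intro v
    obtain ⟨k, hk⟩ := hf.2 (σ.symm v)
    exact ⟨k, by rw [conj_iterate, hk]⟩

lemma conj_swap_conj_swap (x y : Fin (n+1)) (f : Fin (n+1) → Fin (n+1)) :
    conj (Equiv.swap x y) (conj (Equiv.swap x y) f) = f := by
  funext v
  simp [conj, Equiv.symm_swap, Equiv.swap_apply_self]

noncomputable def rootedEquiv :
    {f : Fin (n+1) → Fin (n+1) // IsRooted f} ≃
      {f : Fin (n+1) → Fin (n+1) // RootedAt f 0} × Fin (n+1) where
  toFun p := (⟨conj (Equiv.swap 0 (p.1^[n+1] 0)) p.1, by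
      obtain ⟨f, a, ha⟩ := p
      have hroot : f^[n+1] 0 = a := ha.iterate_card 0
      show RootedAt (conj (Equiv.swap 0 (f^[n+1] 0)) f) 0
      rw [hroot]
      have := ha.conj (σ := Equiv.swap 0 a)
      rwa [Equiv.swap_apply_right] at this⟩,
    p.1^[n+1] 0)
  invFun q := ⟨conj (Equiv.swap 0 q.2) q.1.1, ⟨q.2, by
      have := q.1.2.conj (σ := Equiv.swap 0 q.2)
      rwa [Equiv.swap_apply_left] at this⟩⟩
  left_inv := by
    rintro ⟨f, hf⟩
    apply Subtype.ext
    show conj (Equiv.swap 0 (f^[n+1] 0)) (conj (Equiv.swap 0 (f^[n+1] 0)) f) = f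
    exact conj_swap_conj_swap _ _ f
  right_inv := by
    rintro ⟨⟨f0, h0⟩, a⟩
    have hr : RootedAt (conj (Equiv.swap 0 a) f0) a := by
      have := h0.conj (σ := Equiv.swap 0 a)
      rwa [Equiv.swap_apply_left] at this
    have hroot : (conj (Equiv.swap 0 a) f0)^[n+1] 0 = a := hr.iterate_card 0
    refine Prod.ext (Subtype.ext ?_) ?_
    · show conj (Equiv.swap 0 ((conj (Equiv.swap 0 a) f0)^[n+1] 0))
        (conj (Equiv.swap 0 a) f0) = f0
      rw [hroot]
      exact conj_swap_conj_swap _ _ f0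
    · exact hroot

theorem card_rooted0 :
    Nat.card {f : Fin (n+1) → Fin (n+1) // RootedAt f 0} * ((n+1) * (n+1)) = (n+1)^(n+1) := by
  have h1 : Nat.card (Fin (n+1) → Fin (n+1)) = (n+1)^(n+1) := by
    simp [Nat.card_fun, Nat.card_eq_fintype_card]
  have h2 := Nat.card_congr
    ((joyalEquiv (n := n)).trans ((pairEquiv IsRooted).trans
      ((rootedEquiv (n := n)).prodCongr (Equiv.refl (Fin (n+1))))))
  rw [h1] at h2
  rw [Nat.card_prod, Nat.card_prod, Nat.card_eq_fintype_card (α := Fin (n+1))] at h2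
  simp only [Fintype.card_fin] at h2
  rw [h2]
  ring

end CayleyAux
namespace CayleyAux
open Function List SimpleGraph

variable {n : ℕ}

/-- the graph of a parent function -/
def graphOf (f : Fin (n+1) → Fin (n+1)) : SimpleGraph (Fin (n+1)) where
  Adj u v := u ≠ v ∧ (f u = v ∨ f v = u)
  symm := ⟨by rintro u v ⟨h1, h2⟩; exact ⟨h1.symm, h2.symm⟩⟩
  loopless := ⟨fun v h => h.1 rfl⟩

lemma graphOf_adj {f : Fin (n+1) → Fin (n+1)} {u v} :
    (graphOf f).Adj u v ↔ u ≠ v ∧ (f u = v ∨ f v = u) := Iff.rfl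

variable {f : Fin (n+1) → Fin (n+1)}

/-- height: chainLen lands at 0 -/
lemma ht_spec (hf : RootedAt f 0) (v) : f^[chainLen f v] v = 0 := by
  have := chainLen_spec f v
  rwa [hf.iterate_card v] at this

lemma ht_min (hf : RootedAt f 0) {v} {t : ℕ} (ht : f^[t] v = 0) : chainLen f v ≤ t :=
  chainLen_min f v (by rw [ht, hf.iterate_card v])

lemma ht_eq_zero_iff (hf : RootedAt f 0) {v} : chainLen f v = 0 ↔ v = 0 := by
  constructor
  · intro h
    have := ht_spec hf v
    rwa [h, iterate_zero_apply] at this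
  · rintro rfl
    have : f^[0] (0 : Fin (n+1)) = 0 := rfl
    have := ht_min hf this
    omega

lemma ht_succ (hf : RootedAt f 0) {v} (hv : v ≠ 0) : chainLen f v = chainLen f (f v) + 1 := by
  have h1 : chainLen f v ≠ 0 := fun h => hv ((ht_eq_zero_iff hf).1 h)
  have h2 : f^[chainLen f v - 1] (f v) = 0 := by
    have heq : chainLen f v - 1 + 1 = chainLen f v := by omega
    calc f^[chainLen f v - 1] (f v) = f^[chainLen f v - 1 + 1] v := (iterate_succ_apply f _ v).symm
      _ = 0 := by rw [heq]; exact ht_spec hf v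
  have h3 : chainLen f (f v) ≤ chainLen f v - 1 := ht_min hf h2
  have h4 : f^[chainLen f (f v) + 1] v = 0 := by
    rw [iterate_succ_apply]
    exact ht_spec hf (f v)
  have h5 := ht_min hf h4
  omega

lemma ht_parent (hf : RootedAt f 0) {u v} (huv : u ≠ v) (hp : f u = v) :
    chainLen f u = chainLen f v + 1 := by
  have hu : u ≠ 0 := by
    rintro rfl
    rw [hf.1] at hp
    exact huv hp
  rw [ht_succ hf hu, hp]

lemma graphOf_reachable (hf : RootedAt f 0) : ∀ (k : ℕ) (v), f^[k] v = 0 → (graphOf f).Reachable v 0 := by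
  intro k
  induction k with
  | zero => intro v hv; rw [iterate_zero_apply] at hv; rw [hv]
  | succ k ih =>
    intro v hv
    by_cases hfv : f v = v
    · rw [iterate_fixed hfv] at hv
      rw [hv]
    · have hadj : (graphOf f).Adj v (f v) := ⟨fun h => hfv h.symm, Or.inl rfl⟩
      exact hadj.reachable.trans (ih (f v) (by rwa [← iterate_succ_apply]))

lemma graphOf_connected (hf : RootedAt f 0) : (graphOf f).Connected := by
  have h : ∀ v, (graphOf f).Reachable v 0 := by
    intro v
    obtain ⟨k, hk⟩ := hf.2 v
    exact graphOf_reachable hf k v hk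
  exact ⟨fun u v => (h u).trans (h v).symm⟩

/-- support getD equals getVert -/
lemma walk_support_getD {G : SimpleGraph (Fin (n+1))} :
    ∀ {u v} (p : G.Walk u v) (i : ℕ), i ≤ p.length → ∀ d, p.support.getD i d = p.getVert i := by
  intro u v p
  induction p with
  | nil =>
    intro i hi d
    have : i = 0 := by simpa using hi
    subst this
    rfl
  | @cons a b c h q ih =>
    intro i hi d
    match i with
    | 0 => rfl
    | (j+1) =>
      rw [Walk.support_cons, Walk.getVert_cons_succ]
      exact ih j (by simpa using hi) d

lemma graphOf_acyclic {f : Fin (n+1) → Fin (n+1)} (hf : RootedAt f 0) :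
    (graphOf f).IsAcyclic := by
  intro v c hc
  have hsupn : c.support.toFinset.Nonempty := ⟨v, by simp⟩
  obtain ⟨x, hx, hmax⟩ := Finset.exists_max_image c.support.toFinset (chainLen f) hsupn
  rw [List.mem_toFinset] at hx
  have hmax' : ∀ y ∈ c.support, chainLen f y ≤ chainLen f x := by
    intro y hy
    exact hmax y (List.mem_toFinset.2 hy)
  set c' := c.rotate x hx with hc'def
  have hc' : c'.IsCycle := hc.rotate hx
  have htail : c'.support.tail ~r c.support.tail := Walk.support_rotate c x hx
  set L := c'.length with hLdef
  have hL3 : 3 ≤ L := hc'.three_le_length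
  have hlen_tail : c'.support.tail.length = L := by
    have h := Walk.length_support c'
    rw [Walk.support_eq_cons c'] at h
    simp only [List.length_cons] at h
    omega
  have htail_getD : ∀ (i : ℕ), i < L → ∀ d, c'.support.tail.getD i d = c'.getVert (i+1) := by
    intro i hi d
    have h1 : c'.support.getD (i+1) d = c'.getVert (i+1) :=
      walk_support_getD c' (i+1) (by omega) d
    rw [Walk.support_eq_cons c'] at h1
    exact h1
  set y := c'.getVert 1 with hydef
  set z := c'.getVert (L-1) with hzdef
  have hadjxy : (graphOf f).Adj x y := by
    have := c'.adj_getVert_succ (i := 0) (by omega)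
    rwa [Walk.getVert_zero] at this
  have hadjzx : (graphOf f).Adj z x := by
    have := c'.adj_getVert_succ (i := L-1) (by omega)
    have heq : L - 1 + 1 = L := by omega
    rw [heq] at this
    rwa [show c'.getVert L = x by rw [hLdef, Walk.getVert_length]] at this
  have hy0 : c'.support.tail.getD 0 x = y := by
    have := htail_getD 0 (by omega) x
    simpa using this
  have hz0 : c'.support.tail.getD (L-2) x = z := by
    have := htail_getD (L-2) (by omega) x
    rwa [show L - 2 + 1 = L - 1 by omega] at this
  have hy_tail : y ∈ c'.support.tail := by
    rw [← hy0]
    exact list_getD_mem (by omega) x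
  have hz_tail : z ∈ c'.support.tail := by
    rw [← hz0]
    exact list_getD_mem (by omega) x
  have hy_mem : y ∈ c.support := List.mem_of_mem_tail (htail.mem_iff.1 hy_tail)
  have hz_mem : z ∈ c.support := List.mem_of_mem_tail (htail.mem_iff.1 hz_tail)
  have hty : chainLen f y ≤ chainLen f x := hmax' y hy_mem
  have htz : chainLen f z ≤ chainLen f x := hmax' z hz_mem
  -- f x = y
  have hfxy : f x = y := by
    rcases hadjxy.2 with h | h
    · exact h
    · exfalso
      have := ht_parent hf (hadjxy.1.symm) h
      omega
  have hfxz : f x = z := by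
    rcases hadjzx.2 with h | h
    · exfalso
      have := ht_parent hf hadjzx.1 h
      omega
    · exact h
  have hyz : y = z := by rw [← hfxy, hfxz]
  -- contradiction with nodup tail
  have hnodup : c'.support.tail.Nodup := ((Walk.isCycle_def _).1 hc').2.2
  have e0 : c'.support.tail[0]'(by omega) = y := by
    rw [← hy0, List.getD_eq_getElem _ x (by omega)]
  have e1 : c'.support.tail[L-2]'(by omega) = z := by
    rw [← hz0]
    exact (List.getD_eq_getElem _ x (by omega)).symm
  have : (0 : ℕ) = L - 2 :=
    (hnodup.getElem_inj_iff (hi := by omega) (hj := by omega)).1 (by rw [e0, e1, hyz])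
  omega

lemma graphOf_isTree {f : Fin (n+1) → Fin (n+1)} (hf : RootedAt f 0) :
    (graphOf f).IsTree :=
  IsTree.mk (graphOf_connected hf) (graphOf_acyclic hf)

end CayleyAux
namespace CayleyAux
open Function List SimpleGraph

variable {n : ℕ}

/-- canonical walk along iterates of f down to 0 -/
noncomputable def iterWalk (f : Fin (n+1) → Fin (n+1)) :
    ∀ (k : ℕ) (v : Fin (n+1)), f^[k] v = 0 → (graphOf f).Walk v 0
  | 0, v, h => Walk.nil.copy (show v = 0 by simpa using h).symm rfl
  | (k+1), v, h =>
    if hv : v = 0 then Walk.nil.copy hv.symm rfl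
    else Walk.cons
      (show (graphOf f).Adj v (f v) from
        ⟨fun he => hv (by rw [← h]; exact (iterate_fixed he.symm (k+1)).symm), Or.inl rfl⟩)
      (iterWalk f k (f v) (by rw [← iterate_succ_apply]; exact h))

lemma iterWalk_support (f : Fin (n+1) → Fin (n+1)) :
    ∀ (k : ℕ) (v : Fin (n+1)) (h : f^[k] v = 0),
      ∀ u ∈ (iterWalk f k v h).support, ∃ j, u = f^[j] v := by
  intro k
  induction k with
  | zero =>
    intro v h u hu
    rw [iterWalk, Walk.support_copy, Walk.support_nil] at hu
    simp only [List.mem_singleton] at hu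
    exact ⟨0, by rw [hu, iterate_zero_apply, show v = 0 by simpa using h]⟩
  | succ k ih =>
    intro v h u hu
    rw [iterWalk] at hu
    by_cases hv : v = 0
    · rw [dif_pos hv, Walk.support_copy, Walk.support_nil] at hu
      simp only [List.mem_singleton] at hu
      exact ⟨0, by rw [hu, iterate_zero_apply, hv]⟩
    · rw [dif_neg hv, Walk.support_cons] at hu
      rcases List.mem_cons.1 hu with h1 | h1
      · exact ⟨0, by rw [h1, iterate_zero_apply]⟩
      · obtain ⟨j, hj⟩ := ih (f v) _ u h1
        exact ⟨j + 1, by rw [hj, iterate_succ_apply]⟩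

lemma iterWalk_isPath {f : Fin (n+1) → Fin (n+1)} (hf : RootedAt f 0) :
    ∀ (k : ℕ) (v : Fin (n+1)) (h : f^[k] v = 0), (iterWalk f k v h).IsPath := by
  intro k
  induction k with
  | zero =>
    intro v h
    rw [iterWalk]
    simp
  | succ k ih =>
    intro v h
    rw [iterWalk]
    by_cases hv : v = 0
    · rw [dif_pos hv]; simp
    · rw [dif_neg hv, Walk.cons_isPath_iff]
      refine ⟨ih _ _, fun hmem => ?_⟩
      obtain ⟨j, hj⟩ := iterWalk_support f k (f v) _ v hmem
      have hcyc : Cyclic f v := ⟨j + 1, by omega, by rw [iterate_succ_apply, ← hj]⟩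
      exact hv (hf.eq_of_cyclic hcyc)

lemma iterWalk_getVert1 (f : Fin (n+1) → Fin (n+1)) :
    ∀ (k : ℕ) (v : Fin (n+1)) (h : f^[k] v = 0), v ≠ 0 →
      (iterWalk f k v h).getVert 1 = f v := by
  intro k
  cases k with
  | zero => intro v h hv; exact absurd (by simpa using h) hv
  | succ k =>
    intro v h hv
    rw [iterWalk, dif_neg hv]
    rw [Walk.getVert_cons_succ, Walk.getVert_zero]

/-- the unique path to 0 in a tree -/
noncomputable def pathTo (G : SimpleGraph (Fin (n+1))) (hG : G.IsTree) (v : Fin (n+1)) :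
    G.Walk v 0 :=
  (hG.existsUnique_path v 0).exists.choose

lemma pathTo_isPath (G : SimpleGraph (Fin (n+1))) (hG : G.IsTree) (v : Fin (n+1)) :
    (pathTo G hG v).IsPath :=
  (hG.existsUnique_path v 0).exists.choose_spec

lemma pathTo_unique {G : SimpleGraph (Fin (n+1))} {hG : G.IsTree} {v : Fin (n+1)}
    {q : G.Walk v 0} (hq : q.IsPath) : q = pathTo G hG v :=
  (hG.existsUnique_path v 0).unique hq (pathTo_isPath G hG v)

/-- the parent function of a tree -/
noncomputable def treeFun (G : SimpleGraph (Fin (n+1))) (hG : G.IsTree) :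
    Fin (n+1) → Fin (n+1) := fun v =>
  if v = 0 then 0 else (pathTo G hG v).getVert 1

lemma pathTo_zero (G : SimpleGraph (Fin (n+1))) (hG : G.IsTree) :
    pathTo G hG 0 = Walk.nil := (pathTo_unique Walk.IsPath.nil).symm

lemma treeFun_decomp {G : SimpleGraph (Fin (n+1))} (hG : G.IsTree) {v : Fin (n+1)}
    (hv : v ≠ 0) :
    G.Adj v (treeFun G hG v) ∧
      (pathTo G hG v).length = (pathTo G hG (treeFun G hG v)).length + 1 := by
  obtain ⟨y, hadj, q, hq⟩ := Walk.exists_eq_cons_of_ne hv (pathTo G hG v)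
  have hqp : q.IsPath := by
    have := pathTo_isPath G hG v
    rw [hq] at this
    exact this.of_cons
  have hy : treeFun G hG v = y := by
    rw [treeFun, if_neg hv, hq, Walk.getVert_cons_succ, Walk.getVert_zero]
  have hqq : q = pathTo G hG y := pathTo_unique hqp
  constructor
  · rw [hy]; exact hadj
  · rw [hy, hq, ← hqq, Walk.length_cons]

lemma treeFun_rootedAt {G : SimpleGraph (Fin (n+1))} (hG : G.IsTree) :
    RootedAt (treeFun G hG) 0 := by
  constructor
  · rw [treeFun, if_pos rfl]
  · have H : ∀ (k : ℕ) (v), (pathTo G hG v).length ≤ k →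
        ∃ l, (treeFun G hG)^[l] v = 0 := by
      intro k
      induction k with
      | zero =>
        intro v hv
        by_cases h : v = 0
        · exact ⟨0, h⟩
        · have := (treeFun_decomp hG h).2
          omega
      | succ k ih =>
        intro v hv
        by_cases h : v = 0
        · exact ⟨0, h⟩
        · have hlen := (treeFun_decomp hG h).2
          obtain ⟨l, hl⟩ := ih (treeFun G hG v) (by omega)
          exact ⟨l + 1, by rw [iterate_succ_apply, hl]⟩
    intro v
    exact H (pathTo G hG v).length v le_rfl

lemma adj_treeFun_eq {G : SimpleGraph (Fin (n+1))} (hG : G.IsTree) {u v : Fin (n+1)}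
    (hadj : G.Adj u v) (hle : (pathTo G hG v).length ≤ (pathTo G hG u).length) :
    treeFun G hG u = v := by
  have hu0 : u ≠ 0 := by
    rintro rfl
    have h0 : (pathTo G hG 0).length = 0 := by rw [pathTo_zero]; rfl
    rw [h0] at hle
    have hv0 : v = 0 := Walk.eq_of_length_eq_zero (Nat.le_zero.1 hle)
    exact hadj.ne (by rw [hv0])
  classical
  have hnotmem : u ∉ (pathTo G hG v).support := by
    intro hu
    have hdrop : ((pathTo G hG v).dropUntil u hu).IsPath :=
      (pathTo_isPath G hG v).dropUntil hu
    have hdeq : (pathTo G hG v).dropUntil u hu = pathTo G hG u := pathTo_unique hdrop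
    have hspec := Walk.take_spec (pathTo G hG v) hu
    have hlen : ((pathTo G hG v).takeUntil u hu).length +
        ((pathTo G hG v).dropUntil u hu).length = (pathTo G hG v).length := by
      rw [← Walk.length_append, hspec]
    have htake : ((pathTo G hG v).takeUntil u hu).length ≠ 0 := by
      intro h0
      exact hadj.ne' (Walk.eq_of_length_eq_zero h0)
    rw [hdeq] at hlen
    omega
  have hcons : (Walk.cons hadj (pathTo G hG v)).IsPath :=
    (pathTo_isPath G hG v).cons hnotmem
  have hPu : Walk.cons hadj (pathTo G hG v) = pathTo G hG u := pathTo_unique hcons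
  rw [treeFun, if_neg hu0, ← hPu, Walk.getVert_cons_succ, Walk.getVert_zero]

/-- Roundtrip: graph of the parent function of a tree is the tree -/
theorem graphOf_treeFun {G : SimpleGraph (Fin (n+1))} (hG : G.IsTree) :
    graphOf (treeFun G hG) = G := by
  ext u v
  rw [graphOf_adj]
  constructor
  · rintro ⟨hne, h | h⟩
    · have hu : u ≠ 0 := by
        rintro rfl
        rw [treeFun, if_pos rfl] at h
        exact hne h
      have := (treeFun_decomp hG hu).1
      rwa [h] at this
    · have hv : v ≠ 0 := by
        rintro rfl
        rw [treeFun, if_pos rfl] at h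
        exact hne h.symm
      have := (treeFun_decomp hG hv).1
      rw [h] at this
      exact this.symm
  · intro hadj
    refine ⟨hadj.ne, ?_⟩
    rcases le_total (pathTo G hG v).length (pathTo G hG u).length with h | h
    · exact Or.inl (adj_treeFun_eq hG hadj h)
    · exact Or.inr (adj_treeFun_eq hG hadj.symm h)

/-- Roundtrip: parent function of the graph of a rooted function is the function -/
theorem treeFun_graphOf {f : Fin (n+1) → Fin (n+1)} (hf : RootedAt f 0)
    (hT : (graphOf f).IsTree) : treeFun (graphOf f) hT = f := by
  funext v
  by_cases hv : v = 0
  · rw [hv, treeFun, if_pos rfl, hf.1]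
  · have hw : pathTo (graphOf f) hT v = iterWalk f (chainLen f v) v (ht_spec hf v) :=
      (pathTo_unique (iterWalk_isPath hf _ _ _)).symm
    rw [treeFun, if_neg hv, hw]
    exact iterWalk_getVert1 f _ v _ hv

/-- Trees on Fin (n+1) are in bijection with functions rooted at 0. -/
noncomputable def treeEquiv :
    {G : SimpleGraph (Fin (n+1)) // G.IsTree} ≃
      {f : Fin (n+1) → Fin (n+1) // RootedAt f 0} where
  toFun p := ⟨treeFun p.1 p.2, treeFun_rootedAt p.2⟩
  invFun q := ⟨graphOf q.1, graphOf_isTree q.2⟩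
  left_inv := by
    rintro ⟨G, hG⟩
    exact Subtype.ext (graphOf_treeFun hG)
  right_inv := by
    rintro ⟨f, hf⟩
    exact Subtype.ext (treeFun_graphOf hf (graphOf_isTree hf))

end CayleyAux

/-- Cayley's formula: the number of labeled trees (connected acyclic graphs) on the
vertex set `{0,1,…,n}`, i.e. on `n+1` vertices, is `(n+1)^(n-1)`. -/
theorem card_trees (n : ℕ) :
    Nat.card {G : SimpleGraph (Fin (n + 1)) // G.IsTree} = (n + 1) ^ (n - 1) := by
  have h1 : Nat.card {G : SimpleGraph (Fin (n+1)) // G.IsTree}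
      = Nat.card {f : Fin (n+1) → Fin (n+1) // CayleyAux.RootedAt f 0} :=
    Nat.card_congr CayleyAux.treeEquiv
  have h2 := CayleyAux.card_rooted0 (n := n)
  rw [h1]
  rcases Nat.eq_zero_or_pos n with rfl | hn
  · simpa using h2
  · have hexp : n - 1 + 2 = n + 1 := by omega
    have hpow : (n+1)^(n+1) = (n+1)^(n-1) * ((n+1) * (n+1)) := by
      calc (n+1)^(n+1) = (n+1)^(n-1+2) := by rw [hexp]
        _ = (n+1)^(n-1) * (n+1)^2 := pow_add _ _ _
        _ = (n+1)^(n-1) * ((n+1) * (n+1)) := by ring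
    rw [hpow] at h2
    exact Nat.eq_of_mul_eq_mul_right (by positivity) h2
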